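/- arXiv:2312.16238 — 3 statements merged into one kernel-verified Lean document; each statement's English description precedes it below -/
import Mathlib

section
/- Let K₁ ∈ L¹(ℝ) be real-valued with K₁(t) − K₁(−t) ≥ 0 for all t ≥ 0 and ∫_0^∞ [K₁(t) − K₁(−t)] dt > 0. Define b(λ) = ∫_0^∞ (1 − cos λt)[K₁(t) − K₁(−t)] dt − i ∫_{-∞}^∞ sin(λt)·sign(t)·K₁(t) dt. Then for every real λ ≠ 0, the real part of b(λ) is strictly positive; in particular b(λ) ≠ 0 and the argument of b(λ) lies strictly between −π/2 and π/2. -/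
open MeasureTheory Complex Filter

theorem stmt_4 (K₁ : ℝ → ℝ) (hK₁ : Integrable K₁)
    (hpos : ∀ t : ℝ, 0 ≤ t → 0 ≤ K₁ t - K₁ (-t))
    (hint : 0 < ∫ t in Set.Ioi (0 : ℝ), (K₁ t - K₁ (-t)))
    (b : ℝ → ℂ)
    (hb : ∀ l : ℝ, b l =
      ((∫ t in Set.Ioi (0 : ℝ), (1 - Real.cos (l * t)) * (K₁ t - K₁ (-t)) : ℝ) : ℂ) -
        Complex.I * ((∫ t : ℝ, Real.sin (l * t) * (Real.sign t * K₁ t) : ℝ) : ℂ)) :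
    ∀ l : ℝ, l ≠ 0 →
      0 < (b l).re ∧ b l ≠ 0 ∧
        -(Real.pi / 2) < Complex.arg (b l) ∧ Complex.arg (b l) < Real.pi / 2 := by
  intro l hl
  set g : ℝ → ℝ := fun t => K₁ t - K₁ (-t) with hgdef
  have hg : Integrable g := hK₁.sub hK₁.comp_neg
  have hgI : IntegrableOn g (Set.Ioi 0) := hg.integrableOn
  set f : ℝ → ℝ := fun t => (1 - Real.cos (l * t)) * g t with hfdef
  have hcont : Continuous fun t : ℝ => 1 - Real.cos (l * t) := by continuity
  have hfI : IntegrableOn f (Set.Ioi 0) := by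
    apply hgI.bdd_mul (c := 2) hcont.aestronglyMeasurable
    refine Filter.Eventually.of_forall (fun t => ?_)
    rw [Real.norm_eq_abs, abs_le]
    constructor <;> nlinarith [Real.neg_one_le_cos (l * t), Real.cos_le_one (l * t)]
  have hfnn : 0 ≤ᵐ[volume.restrict (Set.Ioi (0:ℝ))] f := by
    filter_upwards [self_mem_ae_restrict measurableSet_Ioi] with t ht
    exact mul_nonneg (by nlinarith [Real.cos_le_one (l * t)]) (hpos t (le_of_lt ht))
  -- countable bad set
  have hS : volume {t : ℝ | Real.cos (l * t) = 1} = 0 := by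
    have hsub : {t : ℝ | Real.cos (l * t) = 1} ⊆
        Set.range (fun n : ℤ => (n : ℝ) * (2 * Real.pi) / l) := by
      intro t ht
      obtain ⟨n, hn⟩ := (Real.cos_eq_one_iff (l * t)).1 ht
      exact ⟨n, by field_simp; linarith [hn]⟩
    exact measure_mono_null hsub (Set.Countable.measure_zero (Set.countable_range _) _)
  have hpos' : 0 < ∫ t in Set.Ioi (0:ℝ), f t := by
    rcases lt_or_eq_of_le (integral_nonneg_of_ae hfnn) with h | h
    · exact h
    · exfalso
      have hf0 : f =ᵐ[volume.restrict (Set.Ioi (0:ℝ))] 0 :=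
        (integral_eq_zero_iff_of_nonneg_ae hfnn hfI).1 h.symm
      have hSr : (volume.restrict (Set.Ioi (0:ℝ))) {t : ℝ | Real.cos (l * t) = 1} = 0 :=
        le_antisymm (le_trans (Measure.restrict_le_self _) hS.le) bot_le
      have hg0 : g =ᵐ[volume.restrict (Set.Ioi (0:ℝ))] 0 := by
        have hae : ∀ᵐ t ∂(volume.restrict (Set.Ioi (0:ℝ))), ¬ Real.cos (l * t) = 1 := by
          rw [ae_iff]; simpa using hSr
        filter_upwards [hf0, hae] with t h1 h2
        have hne : (1 : ℝ) - Real.cos (l * t) ≠ 0 := by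
          intro hc; exact h2 (by linarith)
        have : (1 - Real.cos (l * t)) * g t = 0 := h1
        simpa [Pi.zero_apply] using (mul_eq_zero.1 this).resolve_left hne
      have : (∫ t in Set.Ioi (0:ℝ), g t) = 0 := by
        rw [integral_congr_ae hg0]; simp
      rw [hgdef] at this
      exact absurd this (ne_of_gt hint)
  have hre : (b l).re = ∫ t in Set.Ioi (0:ℝ), f t := by
    rw [hb l]; simp; rfl
  have h1 : 0 < (b l).re := by rw [hre]; exact hpos'
  have hne : b l ≠ 0 := fun h => by simp [h] at h1
  have habs : |Complex.arg (b l)| < Real.pi / 2 :=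
    Complex.abs_arg_lt_pi_div_two_iff.2 (Or.inl h1)
  rw [abs_lt] at habs
  exact ⟨h1, hne, habs.1, habs.2⟩
end

section
/- Let K₁ ∈ L¹(ℝ) be real-valued with K₁(t) − K₁(−t) ≥ 0 for t ≥ 0, ∫_0^∞ [K₁(t) − K₁(−t)]dt > 0, ∫ t²|K₁(t)|dt < ∞, ν₁(K̃₁) = 0, and ν₂(K̃₁) = ∫_0^∞ t²[K₁(t) − K₁(−t)]dt > 0. Define b as above and c(λ) = (1 + 1/λ²)·b(λ) for λ ≠ 0, extended by c(0) = (1/2)ν₂(K̃₁). Then c is continuous on ℝ, has positive real part everywhere, and in particular c(λ) ≠ 0 for all λ ∈ ℝ. -/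
open MeasureTheory Complex Filter

lemma aux_sin_sub (x : ℝ) : |Real.sin x - x| ≤ 2 * x ^ 2 := by
  have key : ∀ y : ℝ, 0 ≤ y → |Real.sin y - y| ≤ 2 * y ^ 2 := by
    intro y hy
    rcases eq_or_lt_of_le hy with h0 | h0
    · simp [← h0]
    rcases le_or_gt y 1 with h1 | h1
    · have hlt := Real.sin_lt h0
      have hgt := Real.sin_gt_sub_cube h0
      rw [abs_of_nonpos (by linarith)]
      nlinarith [sq_nonneg y]
    · have := Real.neg_one_le_sin y
      have := Real.sin_le_one y
      rw [abs_le]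
      constructor <;> nlinarith
  rcases le_or_gt 0 x with hx | hx
  · exact key x hx
  · have h := key (-x) (by linarith)
    have h2 : Real.sin x - x = -(Real.sin (-x) - (-x)) := by
      rw [Real.sin_neg]; ring
    rw [h2, abs_neg]
    calc |Real.sin (-x) - -x| ≤ 2 * (-x) ^ 2 := h
    _ = 2 * x ^ 2 := by ring

lemma aux_sin_sub_cube (x : ℝ) (h : |x| ≤ 1) : |Real.sin x - x| ≤ |x| ^ 3 := by
  have key : ∀ y : ℝ, 0 ≤ y → y ≤ 1 → |Real.sin y - y| ≤ |y| ^ 3 := by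
    intro y hy hy1
    rcases eq_or_lt_of_le hy with h0 | h0
    · simp [← h0]
    · have hlt := Real.sin_lt h0
      have hgt := Real.sin_gt_sub_cube h0
      rw [abs_of_nonpos (by linarith), _root_.abs_of_nonneg hy]
      nlinarith
  rcases le_or_gt 0 x with hx | hx
  · exact key x hx (by rwa [_root_.abs_of_nonneg hx] at h)
  · have h1 : -x ≤ 1 := by rw [abs_of_neg hx] at h; exact h
    have hk := key (-x) (by linarith) h1
    rw [Real.sin_neg] at hk
    have h2 : Real.sin x - x = -(-Real.sin x - -x) := by ring
    rw [h2, abs_neg]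
    calc |-Real.sin x - -x| ≤ |-x| ^ 3 := hk
    _ = |x| ^ 3 := by rw [abs_neg]

lemma aux_one_sub_cos_eq (x : ℝ) : 1 - Real.cos x = 2 * Real.sin (x / 2) ^ 2 := by
  have := Real.sin_sq_eq_half_sub (x / 2)
  rw [show 2 * (x / 2) = x by ring] at this
  linarith

lemma aux_one_sub_cos_le (x : ℝ) : 1 - Real.cos x ≤ x ^ 2 / 2 := by
  have h1 := aux_one_sub_cos_eq x
  have h2 : Real.sin (x / 2) ^ 2 ≤ (x / 2) ^ 2 := Real.sin_sq_le_sq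
  nlinarith

lemma aux_one_sub_cos_nonneg (x : ℝ) : 0 ≤ 1 - Real.cos x := by
  linarith [Real.cos_le_one x]

lemma aux_sin_div : Tendsto (fun y : ℝ => Real.sin y / y) (nhdsWithin 0 {0}ᶜ) (nhds 1) := by
  have h := hasDerivAt_iff_tendsto_slope.mp (Real.hasDerivAt_sin 0)
  simp only [Real.cos_zero] at h
  refine h.congr fun y => ?_
  simp [slope_def_field, div_eq_mul_inv]

lemma aux_cos_lim (t : ℝ) (ht : t ≠ 0) :
    Tendsto (fun l : ℝ => (1 - Real.cos (l * t)) / l ^ 2) (nhdsWithin 0 {0}ᶜ) (nhds (t ^ 2 / 2)) := by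
  have hmap : Tendsto (fun l : ℝ => l * t / 2) (nhdsWithin 0 {0}ᶜ) (nhdsWithin 0 {0}ᶜ) := by
    rw [tendsto_nhdsWithin_iff]
    constructor
    · have : Tendsto (fun l : ℝ => l * t / 2) (nhds 0) (nhds (0 * t / 2)) :=
        ((continuous_id.mul continuous_const).div_const 2).tendsto 0
      simpa using this.mono_left nhdsWithin_le_nhds
    · filter_upwards [self_mem_nhdsWithin] with l hl
      have hl' : l ≠ 0 := hl
      simp only [Set.mem_compl_iff, Set.mem_singleton_iff]
      positivity
  have H := aux_sin_div.comp hmap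
  have H2 : Tendsto (fun l : ℝ => t ^ 2 / 2 *
      ((Real.sin (l * t / 2) / (l * t / 2)) * (Real.sin (l * t / 2) / (l * t / 2))))
      (nhdsWithin 0 {0}ᶜ) (nhds (t ^ 2 / 2 * (1 * 1))) := (H.mul H).const_mul _
  rw [show t ^ 2 / 2 * (1 * 1) = t ^ 2 / 2 by ring] at H2
  refine H2.congr' ?_
  filter_upwards [self_mem_nhdsWithin] with l hl
  have hl' : l ≠ 0 := hl
  rw [aux_one_sub_cos_eq (l * t)]
  field_simp

lemma aux_sin_lim (t : ℝ) :
    Tendsto (fun l : ℝ => (Real.sin (l * t) - l * t) / l ^ 2) (nhdsWithin 0 {0}ᶜ) (nhds 0) := by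
  apply squeeze_zero_norm' (a := fun l : ℝ => |t| ^ 3 * |l|)
  · have hev : ∀ᶠ l : ℝ in nhds 0, |l| * (|t| + 1) < 1 := by
      have hc : Tendsto (fun l : ℝ => |l| * (|t| + 1)) (nhds 0) (nhds (|(0:ℝ)| * (|t| + 1))) :=
        (_root_.continuous_abs.mul continuous_const).tendsto 0
      simp only [abs_zero, zero_mul] at hc
      exact hc.eventually_lt_const one_pos
    filter_upwards [hev.filter_mono nhdsWithin_le_nhds, self_mem_nhdsWithin] with l h1 hl
    have hl' : l ≠ 0 := hl
    have habs : |l * t| ≤ 1 := by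
      rw [abs_mul]
      nlinarith [abs_nonneg l, abs_nonneg t]
    have hb := aux_sin_sub_cube (l * t) habs
    have hl2 : (0:ℝ) < l ^ 2 := by positivity
    rw [Real.norm_eq_abs, abs_div, _root_.abs_of_nonneg (sq_nonneg l)]
    rw [div_le_iff₀ hl2]
    calc |Real.sin (l * t) - l * t| ≤ |l * t| ^ 3 := hb
    _ = |t| ^ 3 * |l| * l ^ 2 := by
        rw [abs_mul, ← _root_.sq_abs l]; ring

  · have : Tendsto (fun l : ℝ => |t| ^ 3 * |l|) (nhds 0) (nhds (|t| ^ 3 * |(0:ℝ)|)) :=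
      (continuous_const.mul _root_.continuous_abs).tendsto 0
    simp only [abs_zero, mul_zero] at this
    exact this.mono_left nhdsWithin_le_nhds

theorem stmt_8 (K₁ : ℝ → ℝ) (hK₁ : Integrable K₁)
    (hpos : ∀ t : ℝ, 0 ≤ t → 0 ≤ K₁ t - K₁ (-t))
    (hint : 0 < ∫ t in Set.Ioi (0 : ℝ), (K₁ t - K₁ (-t)))
    (hmom2 : Integrable (fun t : ℝ => t ^ 2 * |K₁ t|))
    (hν₁ : (∫ t : ℝ, t * (Real.sign t * K₁ t)) = 0)
    (hν₂ : 0 < ∫ t in Set.Ioi (0 : ℝ), t ^ 2 * (K₁ t - K₁ (-t)))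
    (b c : ℝ → ℂ)
    (hb : ∀ l : ℝ, b l =
      ((∫ t in Set.Ioi (0 : ℝ), (1 - Real.cos (l * t)) * (K₁ t - K₁ (-t)) : ℝ) : ℂ) -
        Complex.I * ((∫ t : ℝ, Real.sin (l * t) * (Real.sign t * K₁ t) : ℝ) : ℂ))
    (hc : ∀ l : ℝ, l ≠ 0 → c l = (1 + 1 / (l : ℂ) ^ 2) * b l)
    (hc0 : c 0 = (((1 / 2 : ℝ) * ∫ t in Set.Ioi (0 : ℝ), t ^ 2 * (K₁ t - K₁ (-t)) : ℝ) : ℂ)) :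
    Continuous c ∧ (∀ l : ℝ, 0 < (c l).re) ∧ ∀ l : ℝ, c l ≠ 0 := by
  -- measurability and integrability facts
  have msign : Measurable Real.sign := by
    unfold Real.sign
    exact Measurable.ite (measurableSet_lt measurable_id measurable_const) measurable_const
      (Measurable.ite (measurableSet_lt measurable_const measurable_id) measurable_const
        measurable_const)
  have hsmK : AEStronglyMeasurable (fun t => Real.sign t * K₁ t) volume :=
    msign.aestronglyMeasurable.mul hK₁.1
  have hg : Integrable (fun t : ℝ => K₁ t - K₁ (-t)) := hK₁.sub hK₁.comp_neg
  have hmom2' : Integrable (fun t : ℝ => t ^ 2 * |K₁ (-t)|) := by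
    have := hmom2.comp_neg
    simpa [neg_sq] using this
  have hsign_abs : ∀ t : ℝ, |Real.sign t| ≤ 1 := by
    intro t
    rcases Real.sign_apply_eq t with h | h | h <;> simp [h]
  have h1mom : Integrable (fun t : ℝ => t * (Real.sign t * K₁ t)) := by
    refine (hK₁.abs.add hmom2).mono' (aestronglyMeasurable_id.mul hsmK) ?_
    filter_upwards with t
    have hs := hsign_abs t
    have h1 : |t| ≤ 1 + t ^ 2 := by nlinarith [abs_nonneg t, _root_.sq_abs t]
    rw [Real.norm_eq_abs, abs_mul, abs_mul]
    have hKn := abs_nonneg (K₁ t)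
    have hsn := abs_nonneg (Real.sign t)
    have htn := abs_nonneg t
    calc |t| * (|Real.sign t| * |K₁ t|) ≤ |t| * (1 * |K₁ t|) := by
          apply mul_le_mul_of_nonneg_left _ htn
          exact mul_le_mul_of_nonneg_right hs hKn
    _ = |t| * |K₁ t| := by ring
    _ ≤ (1 + t ^ 2) * |K₁ t| := mul_le_mul_of_nonneg_right h1 hKn
    _ = |K₁ t| + t ^ 2 * |K₁ t| := by ring
  -- continuity of the two integrals defining b
  have hR_cont : Continuous fun l : ℝ =>
      ∫ t in Set.Ioi (0:ℝ), (1 - Real.cos (l * t)) * (K₁ t - K₁ (-t)) := by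
    apply continuous_of_dominated (bound := fun t : ℝ => 2 * |K₁ t - K₁ (-t)|)
    · intro l
      exact ((continuous_const.sub (Real.continuous_cos.comp
        (continuous_const.mul continuous_id))).aestronglyMeasurable).mul hg.1.restrict
    · intro l
      filter_upwards with t
      rw [Real.norm_eq_abs, abs_mul]
      have h1 : |1 - Real.cos (l * t)| ≤ 2 := by
        rw [abs_le]
        constructor <;> nlinarith [Real.cos_le_one (l * t), Real.neg_one_le_cos (l * t)]
      exact mul_le_mul_of_nonneg_right h1 (abs_nonneg _)
    · exact (hg.abs.const_mul 2).restrict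
    · filter_upwards with t
      exact (continuous_const.sub (Real.continuous_cos.comp
        (continuous_id.mul continuous_const))).mul continuous_const
  have hS_cont : Continuous fun l : ℝ => ∫ t : ℝ, Real.sin (l * t) * (Real.sign t * K₁ t) := by
    apply continuous_of_dominated (bound := fun t : ℝ => |K₁ t|)
    · intro l
      exact ((Real.continuous_sin.comp
        (continuous_const.mul continuous_id)).aestronglyMeasurable).mul hsmK
    · intro l
      filter_upwards with t
      rw [Real.norm_eq_abs, abs_mul, abs_mul]
      have h1 := Real.abs_sin_le_one (l * t)
      have hs := hsign_abs t
      have hKn := abs_nonneg (K₁ t)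
      calc |Real.sin (l * t)| * (|Real.sign t| * |K₁ t|)
          ≤ 1 * (1 * |K₁ t|) := by
            apply mul_le_mul h1 _ (by positivity) zero_le_one
            exact mul_le_mul_of_nonneg_right hs hKn
      _ = |K₁ t| := by ring
    · exact hK₁.abs
    · filter_upwards with t
      exact (Real.continuous_sin.comp (continuous_id.mul continuous_const)).mul continuous_const
  have hb_cont : Continuous b := by
    have : b = fun l : ℝ =>
        ((∫ t in Set.Ioi (0:ℝ), (1 - Real.cos (l * t)) * (K₁ t - K₁ (-t)) : ℝ) : ℂ) -
          Complex.I * ((∫ t : ℝ, Real.sin (l * t) * (Real.sign t * K₁ t) : ℝ) : ℂ) := funext hb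
    rw [this]
    exact (Complex.continuous_ofReal.comp hR_cont).sub
      (continuous_const.mul (Complex.continuous_ofReal.comp hS_cont))
  -- positivity of the real part integral
  have hg_nonneg : 0 ≤ᵐ[volume.restrict (Set.Ioi (0:ℝ))] fun t => K₁ t - K₁ (-t) := by
    filter_upwards [ae_restrict_mem measurableSet_Ioi] with t ht
    exact hpos t (le_of_lt ht)
  have hgsupp : 0 < volume (Function.support (fun t => K₁ t - K₁ (-t)) ∩ Set.Ioi 0) :=
    (setIntegral_pos_iff_support_of_nonneg_ae hg_nonneg hg.integrableOn).mp hint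
  have hRpos : ∀ l : ℝ, l ≠ 0 →
      0 < ∫ t in Set.Ioi (0:ℝ), (1 - Real.cos (l * t)) * (K₁ t - K₁ (-t)) := by
    intro l hl
    have hZc : {t : ℝ | Real.cos (l * t) = 1}.Countable := by
      have hsub : {t : ℝ | Real.cos (l * t) = 1} ⊆
          Set.range (fun n : ℤ => (n : ℝ) * (2 * Real.pi) / l) := by
        intro t ht
        obtain ⟨n, hn⟩ := (Real.cos_eq_one_iff _).mp ht
        exact ⟨n, by field_simp [hn]; linarith [hn]⟩
      exact (Set.countable_range _).mono hsub
    have hZ0 : volume {t : ℝ | Real.cos (l * t) = 1} = 0 := hZc.measure_zero _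
    have hsub2 : (Function.support (fun t => K₁ t - K₁ (-t)) ∩ Set.Ioi 0) \
        {t : ℝ | Real.cos (l * t) = 1} ⊆
        Function.support (fun t => (1 - Real.cos (l * t)) * (K₁ t - K₁ (-t))) ∩ Set.Ioi 0 := by
      rintro t ⟨⟨hts, hti⟩, htz⟩
      refine ⟨?_, hti⟩
      have h2 : 1 - Real.cos (l * t) ≠ 0 := fun h => htz (by simpa using (by linarith : Real.cos (l * t) = 1))
      exact mul_ne_zero h2 hts
    have hpos2 : 0 < volume (Function.support
        (fun t => (1 - Real.cos (l * t)) * (K₁ t - K₁ (-t))) ∩ Set.Ioi 0) := by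
      refine lt_of_lt_of_le ?_ (measure_mono hsub2)
      rwa [measure_diff_null hZ0]
    have hnn : 0 ≤ᵐ[volume.restrict (Set.Ioi (0:ℝ))]
        fun t => (1 - Real.cos (l * t)) * (K₁ t - K₁ (-t)) := by
      filter_upwards [ae_restrict_mem measurableSet_Ioi] with t ht
      exact mul_nonneg (by linarith [Real.cos_le_one (l * t)]) (hpos t (le_of_lt ht))
    have hfi : IntegrableOn (fun t => (1 - Real.cos (l * t)) * (K₁ t - K₁ (-t)))
        (Set.Ioi (0:ℝ)) := by
      refine ((hg.abs.const_mul 2).restrict).mono' (((continuous_const.sub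
        (Real.continuous_cos.comp (continuous_const.mul
          continuous_id))).aestronglyMeasurable).mul hg.1.restrict) ?_
      filter_upwards with t
      rw [Real.norm_eq_abs, abs_mul]
      have h1 : |1 - Real.cos (l * t)| ≤ 2 := by
        rw [abs_le]
        constructor <;> nlinarith [Real.cos_le_one (l * t), Real.neg_one_le_cos (l * t)]
      exact mul_le_mul_of_nonneg_right h1 (abs_nonneg _)
    exact (setIntegral_pos_iff_support_of_nonneg_ae hnn hfi).mpr hpos2
  -- real part of c is positive
  have hre : ∀ l : ℝ, 0 < (c l).re := by
    intro l
    by_cases hl : l = 0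
    · subst hl
      rw [hc0]
      simpa using hν₂
    · rw [hc l hl, hb l]
      have hcast : (1 + 1 / (l : ℂ) ^ 2) = (((1 + 1 / l ^ 2 : ℝ)) : ℂ) := by push_cast; ring
      rw [hcast, Complex.re_ofReal_mul]
      have hone : (0:ℝ) < 1 + 1 / l ^ 2 := by positivity
      refine mul_pos hone ?_
      have : ((((∫ t in Set.Ioi (0:ℝ), (1 - Real.cos (l * t)) * (K₁ t - K₁ (-t)) : ℝ)) : ℂ) -
          Complex.I * (((∫ t : ℝ, Real.sin (l * t) * (Real.sign t * K₁ t) : ℝ)) : ℂ)).re =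
          ∫ t in Set.Ioi (0:ℝ), (1 - Real.cos (l * t)) * (K₁ t - K₁ (-t)) := by simp
      rw [this]
      exact hRpos l hl
  -- limits as l → 0 (punctured)
  have hu_lim : Tendsto (fun l : ℝ => ∫ t in Set.Ioi (0:ℝ),
      (1 - Real.cos (l * t)) / l ^ 2 * (K₁ t - K₁ (-t))) (nhdsWithin 0 {0}ᶜ)
      (nhds (∫ t in Set.Ioi (0:ℝ), t ^ 2 / 2 * (K₁ t - K₁ (-t)))) := by
    apply tendsto_integral_filter_of_dominated_convergence
      (bound := fun t : ℝ => t ^ 2 * |K₁ t| + t ^ 2 * |K₁ (-t)|)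
    · filter_upwards [self_mem_nhdsWithin] with l hl
      exact (((continuous_const.sub (Real.continuous_cos.comp
        (continuous_const.mul continuous_id))).div_const _).aestronglyMeasurable).mul
        hg.1.restrict
    · filter_upwards [self_mem_nhdsWithin] with l hl
      have hl' : (l:ℝ) ≠ 0 := hl
      filter_upwards with t
      rw [Real.norm_eq_abs, abs_mul, abs_div, _root_.abs_of_nonneg (sq_nonneg l),
        _root_.abs_of_nonneg (aux_one_sub_cos_nonneg (l * t))]
      have h1 : (1 - Real.cos (l * t)) / l ^ 2 ≤ t ^ 2 / 2 := by
        rw [div_le_iff₀ (by positivity : (0:ℝ) < l ^ 2)]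
        calc 1 - Real.cos (l * t) ≤ (l * t) ^ 2 / 2 := aux_one_sub_cos_le _
        _ = t ^ 2 / 2 * l ^ 2 := by ring
      have h2 : |K₁ t - K₁ (-t)| ≤ |K₁ t| + |K₁ (-t)| := abs_sub _ _
      have h3 : 0 ≤ (1 - Real.cos (l * t)) / l ^ 2 :=
        div_nonneg (aux_one_sub_cos_nonneg _) (sq_nonneg _)
      nlinarith [mul_le_mul h1 h2 (abs_nonneg (K₁ t - K₁ (-t))) (by positivity : (0:ℝ) ≤ t ^ 2 / 2),
        mul_nonneg (sq_nonneg t) (abs_nonneg (K₁ t)),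
        mul_nonneg (sq_nonneg t) (abs_nonneg (K₁ (-t)))]
    · exact (hmom2.add hmom2').restrict
    · filter_upwards [ae_restrict_mem measurableSet_Ioi] with t ht
      exact (aux_cos_lim t (ne_of_gt ht)).mul_const _
  have hv_lim : Tendsto (fun l : ℝ => ∫ t : ℝ,
      (Real.sin (l * t) - l * t) / l ^ 2 * (Real.sign t * K₁ t)) (nhdsWithin 0 {0}ᶜ)
      (nhds 0) := by
    have h0 : (nhds (0:ℝ)) = nhds (∫ _ : ℝ, (0:ℝ)) := by simp
    rw [h0]
    apply tendsto_integral_filter_of_dominated_convergence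
      (bound := fun t : ℝ => 2 * (t ^ 2 * |K₁ t|))
    · filter_upwards [self_mem_nhdsWithin] with l hl
      exact ((((Real.continuous_sin.comp (continuous_const.mul continuous_id)).sub
        (continuous_const.mul continuous_id)).div_const _).aestronglyMeasurable).mul hsmK
    · filter_upwards [self_mem_nhdsWithin] with l hl
      have hl' : (l:ℝ) ≠ 0 := hl
      filter_upwards with t
      rw [Real.norm_eq_abs, abs_mul, abs_div, _root_.abs_of_nonneg (sq_nonneg l), abs_mul]
      have h1 : |Real.sin (l * t) - l * t| / l ^ 2 ≤ 2 * t ^ 2 := by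
        rw [div_le_iff₀ (by positivity : (0:ℝ) < l ^ 2)]
        calc |Real.sin (l * t) - l * t| ≤ 2 * (l * t) ^ 2 := aux_sin_sub _
        _ = 2 * t ^ 2 * l ^ 2 := by ring
      have hs := hsign_abs t
      nlinarith [mul_le_mul h1 (mul_le_mul_of_nonneg_right hs (abs_nonneg (K₁ t)))
        (mul_nonneg (abs_nonneg (Real.sign t)) (abs_nonneg (K₁ t)))
        (by positivity : (0:ℝ) ≤ 2 * t ^ 2)]
    · exact hmom2.const_mul 2
    · filter_upwards with t
      have := (aux_sin_lim t).mul_const (Real.sign t * K₁ t)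
      simpa using this
  -- integral identities for l ≠ 0
  have hR_eq : ∀ l : ℝ, l ≠ 0 →
      (∫ t in Set.Ioi (0:ℝ), (1 - Real.cos (l * t)) * (K₁ t - K₁ (-t))) =
      l ^ 2 * ∫ t in Set.Ioi (0:ℝ), (1 - Real.cos (l * t)) / l ^ 2 * (K₁ t - K₁ (-t)) := by
    intro l hl
    rw [← integral_const_mul]
    refine integral_congr_ae (Eventually.of_forall fun t => ?_)
    field_simp
  have hv_int : ∀ l : ℝ, l ≠ 0 → Integrable (fun t : ℝ =>
      (Real.sin (l * t) - l * t) / l ^ 2 * (Real.sign t * K₁ t)) := by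
    intro l hl
    refine (hmom2.const_mul 2).mono' ((((Real.continuous_sin.comp
      (continuous_const.mul continuous_id)).sub
      (continuous_const.mul continuous_id)).div_const _).aestronglyMeasurable.mul hsmK) ?_
    filter_upwards with t
    rw [Real.norm_eq_abs, abs_mul, abs_div, _root_.abs_of_nonneg (sq_nonneg l), abs_mul]
    have h1 : |Real.sin (l * t) - l * t| / l ^ 2 ≤ 2 * t ^ 2 := by
      rw [div_le_iff₀ (by positivity : (0:ℝ) < l ^ 2)]
      calc |Real.sin (l * t) - l * t| ≤ 2 * (l * t) ^ 2 := aux_sin_sub _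
      _ = 2 * t ^ 2 * l ^ 2 := by ring
    have hs := hsign_abs t
    nlinarith [mul_le_mul h1 (mul_le_mul_of_nonneg_right hs (abs_nonneg (K₁ t)))
      (mul_nonneg (abs_nonneg (Real.sign t)) (abs_nonneg (K₁ t)))
      (by positivity : (0:ℝ) ≤ 2 * t ^ 2)]
  have hS_eq : ∀ l : ℝ, l ≠ 0 →
      (∫ t : ℝ, Real.sin (l * t) * (Real.sign t * K₁ t)) =
      l ^ 2 * ∫ t : ℝ, (Real.sin (l * t) - l * t) / l ^ 2 * (Real.sign t * K₁ t) := by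
    intro l hl
    have heq : (fun t : ℝ => Real.sin (l * t) * (Real.sign t * K₁ t)) =
        fun t : ℝ => l ^ 2 * ((Real.sin (l * t) - l * t) / l ^ 2 * (Real.sign t * K₁ t)) +
          l * (t * (Real.sign t * K₁ t)) := by
      funext t
      field_simp
      ring
    rw [heq, integral_add ((hv_int l hl).const_mul _) (h1mom.const_mul _), integral_const_mul,
      integral_const_mul, hν₁]
    ring
  have hc_eq : ∀ l : ℝ, l ≠ 0 → c l = ((1 + l ^ 2 : ℝ) : ℂ) *
      (((∫ t in Set.Ioi (0:ℝ), (1 - Real.cos (l * t)) / l ^ 2 * (K₁ t - K₁ (-t)) : ℝ) : ℂ) -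
        Complex.I *
          ((∫ t : ℝ, (Real.sin (l * t) - l * t) / l ^ 2 * (Real.sign t * K₁ t) : ℝ) : ℂ)) := by
    intro l hl
    rw [hc l hl, hb l, hR_eq l hl, hS_eq l hl]
    have hlC : (l : ℂ) ≠ 0 := Complex.ofReal_ne_zero.mpr hl
    push_cast
    field_simp
    ring
  -- continuity
  have hcc : Continuous c := by
    rw [continuous_iff_continuousAt]
    intro l
    by_cases hl : l = 0
    · subst hl
      show Tendsto c (nhds 0) (nhds (c 0))
      rw [← nhdsNE_sup_pure (0:ℝ)]
      refine Tendsto.sup ?_ (tendsto_pure_nhds c 0)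
      have hA : Tendsto (fun l : ℝ => ((1 + l ^ 2 : ℝ) : ℂ)) (nhdsWithin 0 {0}ᶜ)
          (nhds (((1 + (0:ℝ) ^ 2 : ℝ)) : ℂ)) :=
        ((Complex.continuous_ofReal.comp
          (continuous_const.add (continuous_pow 2))).tendsto 0).mono_left nhdsWithin_le_nhds
      have hB := (Complex.continuous_ofReal.tendsto _).comp hu_lim
      have hC := (Complex.continuous_ofReal.tendsto _).comp hv_lim
      have hall := hA.mul (hB.sub ((tendsto_const_nhds (x := Complex.I)).mul hC))
      have hlim : (((1 + (0:ℝ) ^ 2 : ℝ)) : ℂ) *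
          ((((∫ t in Set.Ioi (0:ℝ), t ^ 2 / 2 * (K₁ t - K₁ (-t)) : ℝ)) : ℂ) -
            Complex.I * (((0:ℝ)) : ℂ)) = c 0 := by
        rw [hc0]
        have h12 : (∫ t in Set.Ioi (0:ℝ), t ^ 2 / 2 * (K₁ t - K₁ (-t))) =
            (1/2 : ℝ) * ∫ t in Set.Ioi (0:ℝ), t ^ 2 * (K₁ t - K₁ (-t)) := by
          rw [← integral_const_mul]
          refine integral_congr_ae (Eventually.of_forall fun t => ?_)
          ring
        rw [h12]
        push_cast
        ring
      rw [← hlim]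
      refine hall.congr' ?_
      filter_upwards [self_mem_nhdsWithin] with x hx
      exact (hc_eq x hx).symm
    · have hev : c =ᶠ[nhds l] fun x : ℝ => (1 + 1 / (x : ℂ) ^ 2) * b x := by
        filter_upwards [isOpen_compl_singleton.mem_nhds
          (Set.mem_compl_singleton_iff.mpr hl)] with x hx
        exact hc x hx
      have h1 : ContinuousAt (fun x : ℝ => 1 + 1 / (x : ℂ) ^ 2) l := by
        apply continuousAt_const.add
        exact ContinuousAt.div continuousAt_const
          ((Complex.continuous_ofReal.continuousAt).pow 2)
          (pow_ne_zero 2 (Complex.ofReal_ne_zero.mpr hl))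
      exact (h1.mul hb_cont.continuousAt).congr hev.symm
  exact ⟨hcc, hre, fun l hl0 => lt_irrefl 0 (by simpa [hl0] using hre l)⟩
end

section
/- Let K₀ ∈ L¹(ℝ) be real-valued with K₀(t) + K₀(−t) ≥ 0 for all t ≥ 0, ν₀(K₀) = ∫ K₀ > 0, and ∫ t²|K₀(t)|dt < ∞ with ν₁(K₀) = 0 and ν₂(K₀) > 0. Define d(λ) = ν₀(K₀) − ∫ e^{iλu}K₀(u)du and e(λ) = (1 + 1/λ²)·d(λ) for λ ≠ 0, extended by e(0) = (1/2)ν₂(K₀). Then Re d(λ) = ∫_0^∞ (1 − cos λu)[K₀(u) + K₀(−u)]du ≥ 0 for all λ, and e(λ) ≠ 0 for all real λ ≠ 0. -/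
open MeasureTheory Complex Filter

theorem stmt_12 (K₀ : ℝ → ℝ) (hK₀ : Integrable K₀)
    (hsym : ∀ t : ℝ, 0 ≤ t → 0 ≤ K₀ t + K₀ (-t))
    (hν₀ : 0 < ∫ t : ℝ, K₀ t)
    (hmom2 : Integrable (fun t : ℝ => t ^ 2 * |K₀ t|))
    (hν₁ : (∫ t : ℝ, t * K₀ t) = 0)
    (hν₂ : 0 < ∫ t : ℝ, t ^ 2 * K₀ t)
    (d e : ℝ → ℂ)
    (hd : ∀ l : ℝ, d l =
      ((∫ t : ℝ, K₀ t : ℝ) : ℂ) - ∫ u : ℝ, Complex.exp (Complex.I * l * u) * (K₀ u : ℂ))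
    (he : ∀ l : ℝ, l ≠ 0 → e l = (1 + 1 / (l : ℂ) ^ 2) * d l)
    (he0 : e 0 = (((1 / 2 : ℝ) * ∫ t : ℝ, t ^ 2 * K₀ t : ℝ) : ℂ)) :
    (∀ l : ℝ,
      (d l).re = ∫ u in Set.Ioi (0 : ℝ), (1 - Real.cos (l * u)) * (K₀ u + K₀ (-u)) ∧
      0 ≤ (d l).re) ∧
    ∀ l : ℝ, l ≠ 0 → e l ≠ 0 := by
  have key : ∀ l u : ℝ, (Complex.I * l * u : ℂ) = ((l * u : ℝ) : ℂ) * Complex.I := by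
    intro l u; push_cast; ring
  -- integrability of the complex integrand
  have hexpInt : ∀ l : ℝ,
      Integrable (fun u : ℝ => Complex.exp (Complex.I * l * u) * (K₀ u : ℂ)) := by
    intro l
    refine Integrable.bdd_mul (c := 1) hK₀.ofReal ?_ (Eventually.of_forall fun u => ?_)
    · exact (Complex.continuous_exp.comp (by continuity)).aestronglyMeasurable
    · rw [key l u]
      rw [Complex.norm_exp_ofReal_mul_I]
  -- integrability of (1 - cos(l u)) * K₀ u
  have hg : ∀ l : ℝ, Integrable (fun u : ℝ => (1 - Real.cos (l * u)) * K₀ u) := by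
    intro l
    have hm : AEStronglyMeasurable (fun u : ℝ => 1 - Real.cos (l * u)) volume :=
      (by fun_prop : Continuous _).aestronglyMeasurable
    refine Integrable.bdd_mul (c := 2) hK₀ hm (Eventually.of_forall fun u => ?_)
    rw [Real.norm_eq_abs, abs_le]
    constructor
    · nlinarith [Real.cos_le_one (l * u)]
    · nlinarith [Real.neg_one_le_cos (l * u)]
  -- real part of d
  have hre : ∀ l : ℝ, (d l).re = ∫ u : ℝ, (1 - Real.cos (l * u)) * K₀ u := by
    intro l
    rw [hd l, Complex.sub_re, Complex.ofReal_re]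
    have h1 : (∫ u : ℝ, Complex.exp (Complex.I * l * u) * (K₀ u : ℂ)).re
        = ∫ u : ℝ, Real.cos (l * u) * K₀ u := by
      have h := ContinuousLinearMap.integral_comp_comm Complex.reCLM (hexpInt l)
      simp only [Complex.reCLM_apply] at h
      rw [← h]
      congr 1
      funext u
      rw [key l u, Complex.mul_re, Complex.ofReal_re, Complex.ofReal_im, mul_zero, sub_zero,
        Complex.exp_ofReal_mul_I_re]
    have hcosK : Integrable (fun u : ℝ => Real.cos (l * u) * K₀ u) := by
      have hm : AEStronglyMeasurable (fun u : ℝ => Real.cos (l * u)) volume :=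
        (by fun_prop : Continuous _).aestronglyMeasurable
      exact Integrable.bdd_mul (c := 1) hK₀ hm (Eventually.of_forall fun u => by
        rw [Real.norm_eq_abs]; exact Real.abs_cos_le_one _)
    rw [h1, ← integral_sub hK₀ hcosK]
    congr 1
    funext u
    ring
  -- folding to (0, ∞)
  have hgneg : ∀ l : ℝ, Integrable (fun u : ℝ => (1 - Real.cos (l * -u)) * K₀ (-u)) := by
    intro l
    exact ((Measure.measurePreserving_neg (volume : Measure ℝ)).integrable_comp
      (hg l).aestronglyMeasurable).mpr (hg l)
  have hsplit : ∀ (f : ℝ → ℝ), Integrable f →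
      Integrable (fun u : ℝ => f (-u)) →
      (∫ u : ℝ, f u) = ∫ u in Set.Ioi (0 : ℝ), (f u + f (-u)) := by
    intro f hf hfn
    have h1 : (∫ u in Set.Iic (0 : ℝ), f u) + (∫ u in Set.Ioi (0 : ℝ), f u) = ∫ u : ℝ, f u :=
      intervalIntegral.integral_Iic_add_Ioi hf.integrableOn hf.integrableOn
    have h2 : (∫ u in Set.Iic (0 : ℝ), f u) = ∫ u in Set.Ioi (0 : ℝ), f (-u) := by
      have := integral_comp_neg_Iic (0 : ℝ) (fun u => f (-u))
      simp only [neg_neg, neg_zero] at this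
      exact this
    rw [← h1, h2, ← integral_add hfn.integrableOn hf.integrableOn]
    congr 1
    funext u
    ring
  -- the integrand over (0, ∞)
  have hFeq : ∀ l u : ℝ,
      (1 - Real.cos (l * u)) * K₀ u + (1 - Real.cos (l * -u)) * K₀ (-u)
        = (1 - Real.cos (l * u)) * (K₀ u + K₀ (-u)) := by
    intro l u
    rw [mul_neg, Real.cos_neg]
    ring
  have hdre : ∀ l : ℝ,
      (d l).re = ∫ u in Set.Ioi (0 : ℝ), (1 - Real.cos (l * u)) * (K₀ u + K₀ (-u)) := by
    intro l
    rw [hre l, hsplit _ (hg l) (hgneg l)]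
    exact setIntegral_congr_fun measurableSet_Ioi fun u _ => hFeq l u
  have hnonneg : ∀ l : ℝ, 0 ≤ (d l).re := by
    intro l
    rw [hdre l]
    refine setIntegral_nonneg measurableSet_Ioi fun u hu => ?_
    refine mul_nonneg (by nlinarith [Real.cos_le_one (l * u)]) (hsym u (le_of_lt hu))
  refine ⟨fun l => ⟨hdre l, hnonneg l⟩, fun l hl => ?_⟩
  -- e l ≠ 0 for l ≠ 0
  rw [he l hl]
  have hc : (1 + 1 / (l : ℂ) ^ 2) ≠ 0 := by
    have h : (1 + 1 / (l : ℂ) ^ 2) = ((1 + 1 / l ^ 2 : ℝ) : ℂ) := by push_cast; ring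
    rw [h]
    exact_mod_cast ne_of_gt (by positivity : (0 : ℝ) < 1 + 1 / l ^ 2)
  refine mul_ne_zero hc ?_
  -- show d l ≠ 0 by showing (d l).re ≠ 0
  intro hd0
  have hre0 : (d l).re = 0 := by rw [hd0]; simp
  -- integrand vanishes a.e. on Ioi 0
  have hFint : IntegrableOn (fun u : ℝ => (1 - Real.cos (l * u)) * (K₀ u + K₀ (-u)))
      (Set.Ioi (0 : ℝ)) := by
    have := ((hg l).add (hgneg l)).integrableOn (s := Set.Ioi (0 : ℝ))
    exact this.congr_fun (fun u _ => hFeq l u) measurableSet_Ioi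
  have hFnn : 0 ≤ᵐ[volume.restrict (Set.Ioi (0 : ℝ))]
      fun u : ℝ => (1 - Real.cos (l * u)) * (K₀ u + K₀ (-u)) := by
    refine (ae_restrict_iff' measurableSet_Ioi).2 (Eventually.of_forall fun u hu => ?_)
    exact mul_nonneg (by nlinarith [Real.cos_le_one (l * u)]) (hsym u (le_of_lt hu))
  have hFzero : (fun u : ℝ => (1 - Real.cos (l * u)) * (K₀ u + K₀ (-u)))
      =ᵐ[volume.restrict (Set.Ioi (0 : ℝ))] 0 := by
    refine (integral_eq_zero_iff_of_nonneg_ae hFnn hFint).mp ?_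
    rw [← hdre l, hre0]
  -- the set where cos (l u) = 1 is countable, hence null
  have hcosne : ∀ᵐ u : ℝ, Real.cos (l * u) ≠ 1 := by
    have hcount : Set.Countable {u : ℝ | Real.cos (l * u) = 1} := by
      refine Set.Countable.mono ?_ (Set.countable_range fun n : ℤ => ((n : ℝ) * (2 * Real.pi)) / l)
      intro u hu
      rcases (Real.cos_eq_one_iff (l * u)).1 hu with ⟨n, hn⟩
      exact ⟨n, by field_simp [hn]; linear_combination hn⟩
    have := hcount.measure_zero (volume : Measure ℝ)
    exact measure_eq_zero_iff_ae_notMem.mp this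
  have hsum0 : (fun u : ℝ => K₀ u + K₀ (-u)) =ᵐ[volume.restrict (Set.Ioi (0 : ℝ))] 0 := by
    filter_upwards [hFzero, ae_restrict_of_ae hcosne] with u hFu hcu
    rcases mul_eq_zero.mp hFu with h | h
    · exact absurd (by linarith : Real.cos (l * u) = 1) hcu
    · exact h
  -- derive contradiction with ν₀ > 0
  have hKneg : Integrable (fun u : ℝ => K₀ (-u)) :=
    ((Measure.measurePreserving_neg (volume : Measure ℝ)).integrable_comp
      hK₀.aestronglyMeasurable).mpr hK₀
  have hν0' : (∫ t : ℝ, K₀ t) = ∫ u in Set.Ioi (0 : ℝ), (K₀ u + K₀ (-u)) :=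
    hsplit K₀ hK₀ hKneg
  rw [hν0', integral_eq_zero_of_ae hsum0] at hν₀
  exact lt_irrefl 0 hν₀
end
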